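/- Let ρ_1, …, ρ_n be star-shaped risk measures on 𝒳 satisfying the normality condition: Σ_{i=1}^n ρ_i(Z_i) ≥ 0 for all Z_1, …, Z_n ∈ 𝒳 with Σ_{i=1}^n Z_i = 0. Then the inf-convolution ρ_⋄(X) = inf{ Σ_{i=1}^n ρ_i(Y_i) : Y_1, …, Y_n ∈ 𝒳 and Σ_{i=1}^n Y_i = X } is finite for every X ∈ 𝒳 and defines a star-shaped risk measure on 𝒳. -/
import Mathlib


open BoundedContinuousFunction

def IsRiskMeasure {Ω : Type*} [TopologicalSpace Ω] (ρ : (Ω →ᵇ ℝ) → ℝ) : Prop :=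
  (∀ X Y : Ω →ᵇ ℝ, Y ≤ X → ρ Y ≤ ρ X) ∧
  (∀ (X : Ω →ᵇ ℝ) (m : ℝ), ρ (X - const Ω m) = ρ X - m) ∧
  ρ 0 = 0

def IsStarShaped {Ω : Type*} [TopologicalSpace Ω] (ρ : (Ω →ᵇ ℝ) → ℝ) : Prop :=
  ∀ (X : Ω →ᵇ ℝ) (l : ℝ), 1 < l → l * ρ X ≤ ρ (l • X)

/-- The set of values of decompositions of `X` appearing in the inf-convolution. -/
def infConvValues {Ω : Type*} [TopologicalSpace Ω] {n : ℕ}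
    (ρ : Fin n → (Ω →ᵇ ℝ) → ℝ) (X : Ω →ᵇ ℝ) : Set ℝ :=
  {s : ℝ | ∃ Y : Fin n → (Ω →ᵇ ℝ), (∑ i, Y i) = X ∧ s = ∑ i, ρ i (Y i)}

/-- The inf-convolution `ρ_⋄` of the risk measures `ρ i`. -/
noncomputable def infConv {Ω : Type*} [TopologicalSpace Ω] {n : ℕ}
    (ρ : Fin n → (Ω →ᵇ ℝ) → ℝ) (X : Ω →ᵇ ℝ) : ℝ :=
  sInf (infConvValues ρ X)

section Aux

variable {Ω : Type*} [TopologicalSpace Ω] {n : ℕ}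

lemma aux_sum_update (Y : Fin n → (Ω →ᵇ ℝ)) (j : Fin n) (b : Ω →ᵇ ℝ) :
    ∑ i, Function.update Y j b i = b + (∑ i, Y i) - Y j := by
  rw [Finset.sum_update_of_mem (Finset.mem_univ j)]
  rw [← Finset.add_sum_erase _ Y (Finset.mem_univ j), Finset.sdiff_singleton_eq_erase]
  abel

lemma aux_sum_rho_update (ρ : Fin n → (Ω →ᵇ ℝ) → ℝ) (Y : Fin n → (Ω →ᵇ ℝ)) (j : Fin n)
    (b : Ω →ᵇ ℝ) :
    ∑ i, ρ i (Function.update Y j b i)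
      = ρ j b + ∑ i ∈ Finset.univ.erase j, ρ i (Y i) := by
  rw [← Finset.add_sum_erase _ (fun i => ρ i (Function.update Y j b i)) (Finset.mem_univ j)]
  rw [Function.update_self]
  congr 1
  refine Finset.sum_congr rfl fun i hi => ?_
  rw [Function.update_of_ne (Finset.ne_of_mem_erase hi)]

lemma aux_sum_rho (ρ : Fin n → (Ω →ᵇ ℝ) → ℝ) (Y : Fin n → (Ω →ᵇ ℝ)) (j : Fin n) :
    ∑ i, ρ i (Y i) = ρ j (Y j) + ∑ i ∈ Finset.univ.erase j, ρ i (Y i) :=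
  (Finset.add_sum_erase _ _ (Finset.mem_univ j)).symm

/-- Modifying one component of a decomposition of `X` by subtracting `g` gives a
decomposition of `X - g`. -/
lemma aux_mem_values (ρ : Fin n → (Ω →ᵇ ℝ) → ℝ) {X : Ω →ᵇ ℝ} (g : Ω →ᵇ ℝ)
    {Y : Fin n → (Ω →ᵇ ℝ)} (hY : (∑ i, Y i) = X) (j : Fin n) :
    (ρ j (Y j - g) + ∑ i ∈ Finset.univ.erase j, ρ i (Y i)) ∈ infConvValues ρ (X - g) := by
  refine ⟨Function.update Y j (Y j - g), ?_, (aux_sum_rho_update ρ Y j _).symm⟩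
  rw [aux_sum_update, hY]
  abel

lemma aux_add_const (ρ : (Ω →ᵇ ℝ) → ℝ) (hρ : IsRiskMeasure ρ) (Y : Ω →ᵇ ℝ) (c : ℝ) :
    ρ (Y + const Ω c) = ρ Y + c := by
  have h := hρ.2.1 (Y + const Ω c) c
  rw [add_sub_cancel_right] at h
  linarith

end Aux

theorem infConvolution_of_star_shaped_risk_measures
    {Ω : Type*} [TopologicalSpace Ω] [DiscreteTopology Ω] [Nonempty Ω]
    {n : ℕ} (hn : 0 < n) (ρ : Fin n → (Ω →ᵇ ℝ) → ℝ)
    (hrm : ∀ i, IsRiskMeasure (ρ i)) (hss : ∀ i, IsStarShaped (ρ i))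
    (hnorm : ∀ Z : Fin n → (Ω →ᵇ ℝ), (∑ i, Z i) = 0 → 0 ≤ ∑ i, ρ i (Z i)) :
    (∀ X : Ω →ᵇ ℝ, (infConvValues ρ X).Nonempty ∧ BddBelow (infConvValues ρ X)) ∧
    IsRiskMeasure (infConv ρ) ∧ IsStarShaped (infConv ρ) := by
  set j : Fin n := ⟨0, hn⟩ with hj
  -- Nonemptiness
  have hne : ∀ X : Ω →ᵇ ℝ, (infConvValues ρ X).Nonempty := by
    intro X
    refine ⟨_, Function.update (fun _ => 0) j X, ?_, rfl⟩
    rw [aux_sum_update]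
    simp
  -- Lower bound
  have hlb : ∀ X : Ω →ᵇ ℝ, ∀ s ∈ infConvValues ρ X, -‖X‖ ≤ s := by
    rintro X s ⟨Y, hY, rfl⟩
    have hZsum : (∑ i, Function.update Y j (Y j - X) i) = 0 := by
      rw [aux_sum_update, hY]; abel
    have h0 := hnorm _ hZsum
    rw [aux_sum_rho_update] at h0
    have hle : Y j - X ≤ Y j + const Ω ‖X‖ := by
      intro ω
      have h1 : ‖X ω‖ ≤ ‖X‖ := norm_coe_le_norm X ω
      have h2 : -X ω ≤ ‖X ω‖ := neg_le_abs _
      show Y j ω - X ω ≤ Y j ω + ‖X‖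
      linarith
    have hmono := (hrm j).1 _ _ hle
    have hconst := aux_add_const (ρ j) (hrm j) (Y j) ‖X‖
    rw [aux_sum_rho ρ Y j]
    linarith
  have hbdd : ∀ X : Ω →ᵇ ℝ, BddBelow (infConvValues ρ X) :=
    fun X => ⟨-‖X‖, fun s hs => hlb X s hs⟩
  refine ⟨fun X => ⟨hne X, hbdd X⟩, ⟨?_, ?_, ?_⟩, ?_⟩
  · -- monotonicity
    intro X Y hYX
    refine le_csInf (hne X) ?_
    rintro s ⟨A, hA, rfl⟩
    have hmem := aux_mem_values ρ (X - Y) hA j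
    rw [sub_sub_cancel] at hmem
    have h1 : infConv ρ Y ≤ ρ j (A j - (X - Y)) + ∑ i ∈ Finset.univ.erase j, ρ i (A i) :=
      csInf_le (hbdd Y) hmem
    have h2 : ρ j (A j - (X - Y)) ≤ ρ j (A j) :=
      (hrm j).1 _ _ (fun ω => by
        have : Y ω ≤ X ω := hYX ω
        show A j ω - (X ω - Y ω) ≤ A j ω
        linarith)
    rw [aux_sum_rho ρ A j]
    linarith
  · -- translation invariance
    have key : ∀ (X : Ω →ᵇ ℝ) (m : ℝ), infConv ρ (X - const Ω m) ≤ infConv ρ X - m := by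
      intro X m
      have H : m + infConv ρ (X - const Ω m) ≤ infConv ρ X := by
        refine le_csInf (hne X) ?_
        rintro s ⟨A, hA, rfl⟩
        have hmem := aux_mem_values ρ (const Ω m) hA j
        have h1 : infConv ρ (X - const Ω m)
            ≤ ρ j (A j - const Ω m) + ∑ i ∈ Finset.univ.erase j, ρ i (A i) :=
          csInf_le (hbdd _) hmem
        have h2 : ρ j (A j - const Ω m) = ρ j (A j) - m := (hrm j).2.1 _ _
        rw [aux_sum_rho ρ A j]
        linarith
      linarith
    intro X m
    refine le_antisymm (key X m) ?_
    have h := key (X - const Ω m) (-m)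
    have hXX : X - const Ω m - const Ω (-m) = X := by
      ext ω; simp
    rw [hXX] at h
    linarith
  · -- normalization
    refine le_antisymm ?_ (le_csInf (hne 0) ?_)
    · refine csInf_le (hbdd 0) ⟨fun _ => 0, by simp, ?_⟩
      simp [(fun i => (hrm i).2.2)]
    · rintro s ⟨Z, hZ, rfl⟩
      exact hnorm Z hZ
  · -- star-shapedness
    intro X l hl
    have hl0 : (0 : ℝ) < l := lt_trans one_pos hl
    refine le_csInf (hne (l • X)) ?_
    rintro s ⟨B, hB, rfl⟩
    set A : Fin n → (Ω →ᵇ ℝ) := fun i => l⁻¹ • B i with hA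
    have hAsum : (∑ i, A i) = X := by
      rw [hA, ← Finset.smul_sum, hB, smul_smul, inv_mul_cancel₀ hl0.ne', one_smul]
    have h1 : infConv ρ X ≤ ∑ i, ρ i (A i) := csInf_le (hbdd X) ⟨A, hAsum, rfl⟩
    have h2 : l * ∑ i, ρ i (A i) ≤ ∑ i, ρ i (B i) := by
      rw [Finset.mul_sum]
      refine Finset.sum_le_sum fun i _ => ?_
      have := hss i (A i) l hl
      rwa [hA, smul_smul, mul_inv_cancel₀ hl0.ne', one_smul] at this
    calc l * infConv ρ X ≤ l * ∑ i, ρ i (A i) := by nlinarith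
      _ ≤ ∑ i, ρ i (B i) := h2
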